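/- Let Λ be a non-coherence-generating qubit channel (a channel on 2×2 density matrices mapping every diagonal density matrix to a diagonal matrix). Then for every 2×2 density matrix ρ₂, the coherence of formation satisfies C_f(Λ(ρ₂)) ≤ C_f(ρ₂). -/

import Mathlib

open Matrix BigOperators Kronecker ComplexOrder

/-- Base-2 Shannon entropy of a probability vector, with the convention `0 · log 0 = 0`
(automatic since `Real.logb 2 0 = 0`). -/
noncomputable def shannon2 {n : Type*} [Fintype n] (p : n → ℝ) : ℝ :=
  -∑ i, p i * Real.logb 2 (p i)

/-- A density matrix: positive semidefinite with unit trace. -/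
def IsDensityMatrix {n : Type*} [Fintype n] (ρ : Matrix n n ℂ) : Prop :=
  ρ.PosSemidef ∧ ρ.trace = 1

/-- Von Neumann entropy (base 2): Shannon entropy of the eigenvalues. -/
noncomputable def vN {n : Type*} [Fintype n] [DecidableEq n] (ρ : Matrix n n ℂ) : ℝ :=
  if h : ρ.IsHermitian then shannon2 h.eigenvalues else 0

/-- Relative entropy of coherence `C_r(ρ) = S(Δ(ρ)) - S(ρ)`, where `Δ` is the
diagonal part. -/
noncomputable def Cr {n : Type*} [Fintype n] [DecidableEq n] (ρ : Matrix n n ℂ) : ℝ :=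
  vN (Matrix.diagonal ρ.diag) - vN ρ

/-- Application of a channel given by its Kraus operators: `ρ ↦ ∑ i, K i * ρ * (K i)ᴴ`. -/
noncomputable def krausApply {ι m p : Type*} [Fintype ι] [Fintype m] [Fintype p]
    (K : ι → Matrix p m ℂ) (ρ : Matrix m m ℂ) : Matrix p p ℂ :=
  ∑ i, K i * ρ * (K i)ᴴ

/-- Coherence of formation: infimum over finite pure-state decompositions
`ρ = ∑ i, p i • |ψ i⟩⟨ψ i|` of `∑ i, p i * S(Δ(|ψ i⟩⟨ψ i|))`. -/
noncomputable def Cf {n : Type*} [Fintype n] (ρ : Matrix n n ℂ) : ℝ :=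
  sInf { x : ℝ | ∃ (m : ℕ) (p : Fin m → ℝ) (ψ : Fin m → n → ℂ),
    (∀ i, 0 < p i) ∧ (∑ i, p i = 1) ∧ (∀ i, ∑ j, ‖ψ i j‖ ^ 2 = 1) ∧
    ρ = ∑ i, (p i : ℂ) • Matrix.vecMulVec (ψ i) (star (ψ i)) ∧
    x = ∑ i, p i * shannon2 (fun j => ‖ψ i j‖ ^ 2) }

/-- The set of achievable decomposition-entropies, so that `Cf ρ = sInf (CfSet ρ)`. -/
def CfSet {n : Type*} [Fintype n] (ρ : Matrix n n ℂ) : Set ℝ :=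
  { x : ℝ | ∃ (m : ℕ) (p : Fin m → ℝ) (ψ : Fin m → n → ℂ),
    (∀ i, 0 < p i) ∧ (∑ i, p i = 1) ∧ (∀ i, ∑ j, ‖ψ i j‖ ^ 2 = 1) ∧
    ρ = ∑ i, (p i : ℂ) • Matrix.vecMulVec (ψ i) (star (ψ i)) ∧
    x = ∑ i, p i * shannon2 (fun j => ‖ψ i j‖ ^ 2) }

lemma Cf_eq_sInf {n : Type*} [Fintype n] (ρ : Matrix n n ℂ) : Cf ρ = sInf (CfSet ρ) := rfl

noncomputable def H2 (t : ℝ) : ℝ := Real.binEntropy t / Real.log 2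

lemma shannon2_two {f : Fin 2 → ℝ} {t : ℝ} (h0 : f 0 = t) (h1 : f 1 = 1 - t) :
    shannon2 f = H2 t := by
  simp only [shannon2, Fin.sum_univ_two, h0, h1, H2, Real.binEntropy, Real.logb,
    Real.log_inv]
  ring

lemma shannon2_nonneg {n : Type*} [Fintype n] {f : n → ℝ} (h0 : ∀ i, 0 ≤ f i)
    (h1 : ∑ i, f i = 1) : 0 ≤ shannon2 f := by
  rw [shannon2, neg_nonneg]
  refine Finset.sum_nonpos fun i _ => ?_
  have hle : f i ≤ 1 := by
    calc f i ≤ ∑ j, f j := Finset.single_le_sum (fun j _ => h0 j) (Finset.mem_univ i)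
    _ = 1 := h1
  exact mul_nonpos_of_nonneg_of_nonpos (h0 i)
    (Real.logb_nonpos (b := 2) one_lt_two (h0 i) hle)

lemma H2_one_sub (t : ℝ) : H2 (1 - t) = H2 t := by simp [H2]

lemma H2_bound {s c : ℝ} (hs0 : 0 ≤ s) (hs1 : s ≤ 1) (hc : 0 ≤ c)
    (hcs : c ^ 2 ≤ s * (1 - s)) : H2 ((1 + Real.sqrt (1 - 4 * c ^ 2)) / 2) ≤ H2 s := by
  set r := Real.sqrt (1 - 4 * c ^ 2) with hr
  have h1 : (2 * s - 1) ^ 2 ≤ 1 - 4 * c ^ 2 := by nlinarith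
  have hrabs : |2 * s - 1| ≤ r := by
    rw [hr, ← Real.sqrt_sq_eq_abs]
    exact Real.sqrt_le_sqrt h1
  have hr1 : r ≤ 1 := (Real.sqrt_le_one (x := 1 - 4*c^2)).2 (by nlinarith)
  have hr0 : 0 ≤ r := Real.sqrt_nonneg _
  rcases abs_le.1 hrabs with ⟨ha, hb⟩
  have hms : max s (1 - s) ≤ (1 + r) / 2 := by
    rw [max_le_iff]; constructor <;> linarith
  have hmem1 : max s (1 - s) ∈ Set.Icc (2:ℝ)⁻¹ 1 := by
    constructor
    · rw [le_max_iff]; by_cases h : (2:ℝ)⁻¹ ≤ s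
      · exact Or.inl h
      · right; push_neg at h; linarith
    · rw [max_le_iff]; constructor <;> linarith
  have hmem2 : (1 + r) / 2 ∈ Set.Icc (2:ℝ)⁻¹ 1 := by
    constructor <;> [skip; skip] <;> [linarith; linarith]
  have key : Real.binEntropy ((1 + r) / 2) ≤ Real.binEntropy (max s (1 - s)) := by
    rcases eq_or_lt_of_le hms with h | h
    · rw [h]
    · exact (Real.binEntropy_strictAntiOn hmem1 hmem2 h).le
  have key2 : Real.binEntropy (max s (1 - s)) = Real.binEntropy s := by
    rcases max_cases s (1 - s) with ⟨h, _⟩ | ⟨h, _⟩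
    · rw [h]
    · rw [h, Real.binEntropy_one_sub]
  rw [H2, H2, ← key2]
  have := Real.log_pos one_lt_two
  gcongr


/-- Compatibility: the complex absolute value, as an `AbsoluteValue` built from the norm. -/
noncomputable def Complex.abs : AbsoluteValue ℂ ℝ :=
  IsAbsoluteValue.toAbsoluteValue (fun z : ℂ => ‖z‖)

lemma Complex.abs_apply' (z : ℂ) : Complex.abs z = ‖z‖ := rfl

@[simp] lemma Complex.abs_ofReal (r : ℝ) : Complex.abs (r : ℂ) = |r| := by
  rw [Complex.abs_apply', Complex.norm_real, Real.norm_eq_abs]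

lemma Complex.norm_eq_abs (z : ℂ) : ‖z‖ = Complex.abs z := rfl

@[simp] lemma Complex.abs_conj (z : ℂ) : Complex.abs ((starRingEnd ℂ) z) = Complex.abs z := by
  rw [Complex.abs_apply', Complex.abs_apply', Complex.norm_conj]

lemma Complex.normSq_eq_abs (z : ℂ) : Complex.normSq z = Complex.abs z ^ 2 := by
  rw [Complex.abs_apply', Complex.normSq_eq_norm_sq]

section pure
variable {n : Type*} [Fintype n]

lemma pure_posSemidef (ψ : n → ℂ) : (vecMulVec ψ (star ψ)).PosSemidef := by
  have h : vecMulVec ψ (star ψ) = replicateCol Unit ψ * (replicateCol Unit ψ)ᴴ := by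
    rw [conjTranspose_replicateCol, vecMulVec_eq Unit]
  rw [h]
  exact posSemidef_self_mul_conjTranspose _

lemma pure_trace (ψ : n → ℂ) (h : ∑ j, ‖ψ j‖ ^ 2 = 1) :
    (vecMulVec ψ (star ψ)).trace = 1 := by
  have : ∀ i, ψ i * star (ψ i) = ((‖ψ i‖ ^ 2 : ℝ) : ℂ) := by
    intro i
    rw [show star (ψ i) = starRingEnd ℂ (ψ i) from rfl, RCLike.mul_conj]
    norm_cast
  rw [trace]
  simp only [diag_apply, vecMulVec_apply, Pi.star_apply, this]
  rw [← Complex.ofReal_sum, h, Complex.ofReal_one]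
end pure

section kraus
variable {ι m : Type*} [Fintype ι] [Fintype m] [DecidableEq m] (K : ι → Matrix m m ℂ)

lemma krausApply_trace (hK : ∑ i, (K i)ᴴ * K i = 1) (M : Matrix m m ℂ) :
    (krausApply K M).trace = M.trace := by
  rw [krausApply, trace_sum]
  have : ∀ i, (K i * M * (K i)ᴴ).trace = ((K i)ᴴ * K i * M).trace := by
    intro i
    rw [trace_mul_cycle]
  rw [Finset.sum_congr rfl fun i _ => this i, ← trace_sum, ← Finset.sum_mul, hK, Matrix.one_mul]

lemma krausApply_posSemidef {M : Matrix m m ℂ} (hM : M.PosSemidef) :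
    (krausApply K M).PosSemidef := by
  rw [krausApply]
  exact Finset.sum_induction _ _ (fun a b ha hb => ha.add hb) Matrix.PosSemidef.zero
    (fun i _ => hM.mul_mul_conjTranspose_same (K i))

lemma krausApply_isDensity (hK : ∑ i, (K i)ᴴ * K i = 1) {M : Matrix m m ℂ}
    (hM : IsDensityMatrix M) : IsDensityMatrix (krausApply K M) :=
  ⟨krausApply_posSemidef K hM.1, by rw [krausApply_trace K hK, hM.2]⟩

lemma krausApply_sum_smul {k : ℕ} (c : Fin k → ℂ) (M : Fin k → Matrix m m ℂ) :
    krausApply K (∑ i, c i • M i) = ∑ i, c i • krausApply K (M i) := by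
  simp only [krausApply, Finset.mul_sum, Finset.sum_mul, Matrix.mul_smul, Matrix.smul_mul,
    Finset.smul_sum]
  rw [Finset.sum_comm]

end kraus

section density2
variable {σ : Matrix (Fin 2) (Fin 2) ℂ}

lemma density_diag_re (hσ : IsDensityMatrix σ) :
    σ 0 0 = ((σ 0 0).re : ℂ) ∧ σ 1 1 = ((1 - (σ 0 0).re : ℝ) : ℂ) ∧
    σ 1 0 = (starRingEnd ℂ) (σ 0 1) := by
  have hh := hσ.1.1
  have h00 : (starRingEnd ℂ) (σ 0 0) = σ 0 0 := by
    conv_rhs => rw [← hh]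
    simp [conjTranspose_apply]
  have h11 : (starRingEnd ℂ) (σ 1 1) = σ 1 1 := by
    conv_rhs => rw [← hh]
    simp [conjTranspose_apply]
  have h10 : σ 1 0 = (starRingEnd ℂ) (σ 0 1) := by
    conv_lhs => rw [← hh]
    simp [conjTranspose_apply]
  have htr : σ 0 0 + σ 1 1 = 1 := by
    have := hσ.2
    rwa [trace_fin_two] at this
  refine ⟨(Complex.conj_eq_iff_re.1 h00).symm, ?_, h10⟩
  have h11re : σ 1 1 = ((σ 1 1).re : ℂ) := (Complex.conj_eq_iff_re.1 h11).symm
  rw [h11re]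
  norm_cast
  have : (σ 0 0).re + (σ 1 1).re = 1 := by
    have := congrArg Complex.re htr
    simpa using this
  linarith

lemma density_offdiag_sq (hσ : IsDensityMatrix σ) :
    Complex.abs (σ 0 1) ^ 2 ≤ (σ 0 0).re * (1 - (σ 0 0).re) := by
  obtain ⟨h00, h11, h10⟩ := density_diag_re hσ
  set x := (σ 0 0).re with hx
  set c := Complex.abs (σ 0 1) with hc
  -- quadratic in t
  have key : ∀ t : ℝ, 0 ≤ x * (t * t) + (-(2 * c)) * t + (1 - x) := by
    intro t
    set w : ℂ := if σ 0 1 = 0 then 1 else -((starRingEnd ℂ) (σ 0 1)) / (c : ℂ) with hw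
    have hwc : σ 0 1 * w = -(c : ℂ) := by
      by_cases h : σ 0 1 = 0
      · simp [hw, h, hc]
      · have hcne : (c : ℂ) ≠ 0 := by
          simp only [hc, ne_eq, Complex.ofReal_eq_zero, map_eq_zero]; exact h
        have habs : (starRingEnd ℂ) (σ 0 1) * σ 0 1 = ((c ^ 2 : ℝ) : ℂ) := by
          rw [mul_comm, Complex.mul_conj]
          norm_cast
          rw [Complex.normSq_eq_abs]
        rw [hw, if_neg h, mul_div_assoc', mul_neg, mul_comm (σ 0 1), habs, neg_div, neg_inj,
          div_eq_iff hcne]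
        push_cast
        ring
    have hww : (starRingEnd ℂ) w * w = 1 := by
      by_cases h : σ 0 1 = 0
      · simp [hw, h]
      · have hcne : (c : ℂ) ≠ 0 := by
          simp only [hc, ne_eq, Complex.ofReal_eq_zero, map_eq_zero]; exact h
        have habs : (starRingEnd ℂ) (σ 0 1) * σ 0 1 = ((c ^ 2 : ℝ) : ℂ) := by
          rw [mul_comm, Complex.mul_conj]
          norm_cast
          rw [Complex.normSq_eq_abs]
        simp only [hw, if_neg h]
        have habs2 : σ 0 1 * (starRingEnd ℂ) (σ 0 1) = ((c ^ 2 : ℝ) : ℂ) := by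
          rw [Complex.mul_conj]; norm_cast; rw [Complex.normSq_eq_abs]
        rw [map_div₀, map_neg, Complex.conj_conj, Complex.conj_ofReal,
          div_mul_div_comm, neg_mul_neg, habs2]
        rw [div_eq_one_iff_eq (mul_ne_zero hcne hcne)]
        push_cast; ring
    have hnn := hσ.1.re_dotProduct_nonneg ![(t : ℂ), w]
    have hexp : star ![(t : ℂ), w] ⬝ᵥ σ.mulVec ![(t : ℂ), w]
        = (t : ℂ) ^ 2 * σ 0 0 + (t : ℂ) * (σ 0 1 * w) + (t : ℂ) * ((starRingEnd ℂ) (σ 0 1 * w))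
          + ((starRingEnd ℂ) w * w) * σ 1 1 := by
      simp only [dotProduct, mulVec, Fin.sum_univ_two, Pi.star_apply, Matrix.cons_val_zero,
        Matrix.cons_val_one, Matrix.head_cons, h10, dotProduct, RCLike.star_def,
        Complex.conj_ofReal]
      rw [_root_.map_mul]
      ring
    have heq : (t : ℂ) ^ 2 * σ 0 0 + (t : ℂ) * (σ 0 1 * w) + (t : ℂ) * ((starRingEnd ℂ) (σ 0 1 * w))
          + ((starRingEnd ℂ) w * w) * σ 1 1
        = ((x * (t * t) + (-(2 * c)) * t + (1 - x) : ℝ) : ℂ) := by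
      rw [hwc, hww, h00, h11, map_neg, Complex.conj_ofReal]
      push_cast
      ring
    rw [hexp, heq] at hnn
    simpa using hnn
  have hd := discrim_le_zero key
  rw [discrim] at hd
  nlinarith [hd]

end density2

section offdiag
variable {N : ℕ} (K : Fin N → Matrix (Fin 2) (Fin 2) ℂ)

/-- coefficient of `M i j` in `(krausApply K M) 0 1`. -/
noncomputable def kco (i j : Fin 2) : ℂ := ∑ n, K n 0 i * (starRingEnd ℂ) (K n 1 j)

lemma krausApply_entry01 (M : Matrix (Fin 2) (Fin 2) ℂ) :
    krausApply K M 0 1 = M 0 0 * kco K 0 0 + M 0 1 * kco K 0 1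
      + M 1 0 * kco K 1 0 + M 1 1 * kco K 1 1 := by
  have h : ∀ n : Fin N, (K n * M * (K n)ᴴ) 0 1
      = M 0 0 * (K n 0 0 * (starRingEnd ℂ) (K n 1 0))
      + M 0 1 * (K n 0 0 * (starRingEnd ℂ) (K n 1 1))
      + M 1 0 * (K n 0 1 * (starRingEnd ℂ) (K n 1 0))
      + M 1 1 * (K n 0 1 * (starRingEnd ℂ) (K n 1 1)) := by
    intro n
    simp only [mul_apply, conjTranspose_apply, Fin.sum_univ_two, RCLike.star_def]
    ring
  rw [krausApply, Matrix.sum_apply]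
  simp only [h, kco, Finset.mul_sum]
  rw [Finset.sum_add_distrib, Finset.sum_add_distrib, Finset.sum_add_distrib]

lemma kco_diag_zero
    (hKraus : ∑ i, (K i)ᴴ * K i = 1)
    (hNC : ∀ σ : Matrix (Fin 2) (Fin 2) ℂ,
      IsDensityMatrix σ → σ.IsDiag → (krausApply K σ).IsDiag) :
    kco K 0 0 = 0 ∧ kco K 1 1 = 0 := by
  have h0 : IsDensityMatrix (diagonal ![(1:ℂ), 0]) := by
    refine ⟨posSemidef_diagonal_iff.2 ?_, ?_⟩
    · intro i; fin_cases i <;> simp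
    · simp [trace_diagonal]
  have h1 : IsDensityMatrix (diagonal ![(0:ℂ), 1]) := by
    refine ⟨posSemidef_diagonal_iff.2 ?_, ?_⟩
    · intro i; fin_cases i <;> simp
    · simp [trace_diagonal]
  have hd0 : krausApply K (diagonal ![(1:ℂ), 0]) 0 1 = 0 :=
    hNC _ h0 (isDiag_diagonal _) (show (0:Fin 2) ≠ 1 by decide)
  have hd1 : krausApply K (diagonal ![(0:ℂ), 1]) 0 1 = 0 :=
    hNC _ h1 (isDiag_diagonal _) (show (0:Fin 2) ≠ 1 by decide)
  rw [krausApply_entry01] at hd0 hd1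
  constructor
  · simpa [diagonal] using hd0
  · simpa [diagonal] using hd1

lemma kco_unimodular_bound
    (hKraus : ∑ i, (K i)ᴴ * K i = 1)
    (hNC : ∀ σ : Matrix (Fin 2) (Fin 2) ℂ,
      IsDensityMatrix σ → σ.IsDiag → (krausApply K σ).IsDiag)
    (s : ℂ) (hs : Complex.abs s = 1) :
    Complex.abs (s * kco K 0 1 + (starRingEnd ℂ) s * kco K 1 0) ≤ 1 := by
  obtain ⟨hc00, hc11⟩ := kco_diag_zero K hKraus hNC
  set r2 : ℝ := Real.sqrt 2 with hr2
  have hr2pos : (0:ℝ) < r2 := Real.sqrt_pos.2 (by norm_num)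
  set v : Fin 2 → ℂ := ![s * (r2⁻¹ : ℝ), ((r2⁻¹ : ℝ) : ℂ)] with hv
  have hnorm : ∑ j, ‖v j‖ ^ 2 = 1 := by
    simp [hv, Fin.sum_univ_two, norm_mul, Complex.norm_real, hs,
      Complex.norm_eq_abs, abs_of_pos (inv_pos.2 hr2pos)]
    rw [hr2, Real.sq_sqrt (by norm_num : (0:ℝ) ≤ 2)]
    norm_num
  have h2 : ((r2⁻¹ : ℝ) : ℂ) * ((r2⁻¹ : ℝ) : ℂ) = (((2:ℝ)⁻¹ : ℝ) : ℂ) := by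
    norm_cast
    rw [← mul_inv, Real.mul_self_sqrt (by norm_num : (0:ℝ) ≤ 2)]
  have hD : IsDensityMatrix (krausApply K (vecMulVec v (star v))) :=
    krausApply_isDensity K hKraus ⟨pure_posSemidef v, pure_trace v hnorm⟩
  have hsq := density_offdiag_sq hD
  have habs : Complex.abs (krausApply K (vecMulVec v (star v)) 0 1) ≤ 2⁻¹ := by
    nlinarith [Complex.abs.nonneg (krausApply K (vecMulVec v (star v)) 0 1),
      sq_nonneg ((krausApply K (vecMulVec v (star v)) 0 0).re - 2⁻¹)]
  have hentry : krausApply K (vecMulVec v (star v)) 0 1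
      = (((2:ℝ)⁻¹ : ℝ) : ℂ) * (s * kco K 0 1 + (starRingEnd ℂ) s * kco K 1 0) := by
    rw [krausApply_entry01]
    simp only [vecMulVec_apply, hv, Pi.star_apply, Matrix.cons_val_zero, Matrix.cons_val_one,
      Matrix.head_cons, hc00, hc11, RCLike.star_def, Complex.conj_ofReal, _root_.map_mul]
    linear_combination (s * kco K 0 1 + (starRingEnd ℂ) s * kco K 1 0) * h2
  rw [hentry, _root_.map_mul] at habs
  rw [show Complex.abs (((2:ℝ)⁻¹ : ℝ) : ℂ) = 2⁻¹ by
    rw [Complex.abs_ofReal]; norm_num] at habs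
  linarith

lemma pure_offdiag_bound
    (hKraus : ∑ i, (K i)ᴴ * K i = 1)
    (hNC : ∀ σ : Matrix (Fin 2) (Fin 2) ℂ,
      IsDensityMatrix σ → σ.IsDiag → (krausApply K σ).IsDiag)
    (ψ : Fin 2 → ℂ) :
    Complex.abs (krausApply K (vecMulVec ψ (star ψ)) 0 1) ≤ ‖ψ 0‖ * ‖ψ 1‖ := by
  obtain ⟨hc00, hc11⟩ := kco_diag_zero K hKraus hNC
  have hconjz : ψ 1 * star (ψ 0) = (starRingEnd ℂ) (ψ 0 * star (ψ 1)) := by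
    simp only [RCLike.star_def, _root_.map_mul, Complex.conj_conj]
    ring
  have hentry : krausApply K (vecMulVec ψ (star ψ)) 0 1
      = (ψ 0 * star (ψ 1)) * kco K 0 1
        + (starRingEnd ℂ) (ψ 0 * star (ψ 1)) * kco K 1 0 := by
    rw [krausApply_entry01]
    simp only [vecMulVec_apply, Pi.star_apply, hc00, hc11, hconjz]
    ring
  set z := ψ 0 * star (ψ 1) with hz
  have habsz : Complex.abs z = ‖ψ 0‖ * ‖ψ 1‖ := by
    rw [hz, _root_.map_mul]
    simp [Complex.norm_eq_abs, RCLike.star_def]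
  by_cases h0 : z = 0
  · rw [hentry, h0]
    simp only [map_zero, zero_mul, add_zero, mul_zero, zero_add]
    positivity
  · set s : ℂ := z / ((Complex.abs z : ℝ) : ℂ) with hs
    have habne : ((Complex.abs z : ℝ) : ℂ) ≠ 0 := by
      simp only [ne_eq, Complex.ofReal_eq_zero, map_eq_zero]
      exact h0
    have hsabs : Complex.abs s = 1 := by
      rw [hs, map_div₀, Complex.abs_ofReal, abs_of_nonneg (Complex.abs.nonneg z)]
      exact div_self (Complex.abs.ne_zero h0)
    have hzs : z = ((Complex.abs z : ℝ) : ℂ) * s := by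
      rw [hs]; field_simp
    have hzsc : (starRingEnd ℂ) z = ((Complex.abs z : ℝ) : ℂ) * (starRingEnd ℂ) s := by
      conv_lhs => rw [hzs]
      rw [_root_.map_mul, Complex.conj_ofReal]
    have hrew : z * kco K 0 1 + (starRingEnd ℂ) z * kco K 1 0
        = ((Complex.abs z : ℝ) : ℂ) * (s * kco K 0 1 + (starRingEnd ℂ) s * kco K 1 0) := by
      rw [hs, map_div₀, Complex.conj_ofReal]
      field_simp
    rw [hentry, hrew, _root_.map_mul, Complex.abs_ofReal,
      abs_of_nonneg (Complex.abs.nonneg z), ← habsz]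
    calc Complex.abs z * Complex.abs (s * kco K 0 1 + (starRingEnd ℂ) s * kco K 1 0)
        ≤ Complex.abs z * 1 :=
          mul_le_mul_of_nonneg_left (kco_unimodular_bound K hKraus hNC s hsabs)
            (Complex.abs.nonneg z)
      _ = Complex.abs z := mul_one _
end offdiag

section decomp

lemma qubit_decomp {σ : Matrix (Fin 2) (Fin 2) ℂ} (hσ : IsDensityMatrix σ) :
    ∃ (q : ℝ) (χ φ : Fin 2 → ℂ),
      0 ≤ q ∧ q ≤ 1 ∧ (∑ j, ‖χ j‖ ^ 2 = 1) ∧ (∑ j, ‖φ j‖ ^ 2 = 1) ∧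
      σ = ((q : ℝ) : ℂ) • vecMulVec χ (star χ)
        + (((1 - q : ℝ)) : ℂ) • vecMulVec φ (star φ) ∧
      (‖χ 0‖ ^ 2 = (1 + Real.sqrt (1 - 4 * Complex.abs (σ 0 1) ^ 2)) / 2 ∧
       ‖χ 1‖ ^ 2 = 1 - (1 + Real.sqrt (1 - 4 * Complex.abs (σ 0 1) ^ 2)) / 2) ∧
      (‖φ 0‖ ^ 2 = 1 - (1 + Real.sqrt (1 - 4 * Complex.abs (σ 0 1) ^ 2)) / 2 ∧
       ‖φ 1‖ ^ 2 = (1 + Real.sqrt (1 - 4 * Complex.abs (σ 0 1) ^ 2)) / 2) := by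
  obtain ⟨h00, h11, h10⟩ := density_diag_re hσ
  set x := (σ 0 0).re with hx
  set c := Complex.abs (σ 0 1) with hc
  have hcs := density_offdiag_sq hσ
  rw [← hx, ← hc] at hcs
  have hc0 : 0 ≤ c := Complex.abs.nonneg _
  have hx0 : 0 ≤ x := by nlinarith [sq_nonneg c]
  have hx1 : x ≤ 1 := by nlinarith [sq_nonneg c]
  set r : ℝ := Real.sqrt (1 - 4 * c ^ 2) with hr
  have hrange : (2 * x - 1) ^ 2 ≤ 1 - 4 * c ^ 2 := by nlinarith
  have hrabs : |2 * x - 1| ≤ r := by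
    rw [hr, ← Real.sqrt_sq_eq_abs]; exact Real.sqrt_le_sqrt hrange
  have hr0 : 0 ≤ r := Real.sqrt_nonneg _
  have hr1 : r ≤ 1 := (Real.sqrt_le_one (x := 1 - 4 * c ^ 2)).2 (by nlinarith)
  have hrsq : r ^ 2 = 1 - 4 * c ^ 2 := Real.sq_sqrt (by nlinarith)
  set t : ℝ := (1 + r) / 2 with ht
  have ht0 : 0 ≤ t := by rw [ht]; linarith
  have ht1 : t ≤ 1 := by rw [ht]; linarith
  have ht1' : 0 ≤ 1 - t := by linarith
  have htc : t * (1 - t) = c ^ 2 := by rw [ht]; nlinarith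
  have hsqrtc : Real.sqrt t * Real.sqrt (1 - t) = c := by
    rw [← Real.sqrt_mul ht0, htc, Real.sqrt_sq hc0]
  rcases abs_le.1 hrabs with ⟨hra, hrb⟩
  -- the phase
  set u : ℂ := if σ 0 1 = 0 then 1 else σ 0 1 / ((c : ℝ) : ℂ) with hu
  have huabs : Complex.abs u = 1 := by
    by_cases h : σ 0 1 = 0
    · simp [hu, h]
    · have : (c:ℂ) ≠ 0 := by
        simp only [ne_eq, Complex.ofReal_eq_zero, hc, map_eq_zero]; exact h
      rw [hu, if_neg h, map_div₀, Complex.abs_ofReal, hc,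
        abs_of_nonneg (Complex.abs.nonneg _)]
      exact div_self (Complex.abs.ne_zero h)
  have huc : u * ((c : ℝ) : ℂ) = σ 0 1 := by
    by_cases h : σ 0 1 = 0
    · simp [hu, h, hc]
    · have hcne : ((c:ℝ):ℂ) ≠ 0 := by
        simp only [ne_eq, Complex.ofReal_eq_zero, hc, map_eq_zero]; exact h
      rw [hu, if_neg h]; field_simp
  have huu : u * (starRingEnd ℂ) u = 1 := by
    have := Complex.mul_conj u
    rw [this, Complex.normSq_eq_abs, huabs]; norm_num
  -- the weight
  set q : ℝ := if r = 0 then 1/2 else (x - (1 - t)) / (2 * t - 1) with hq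
  have h2t1 : 2 * t - 1 = r := by rw [ht]; ring
  have hq0 : 0 ≤ q := by
    rw [hq]; split
    · norm_num
    · rename_i h
      apply div_nonneg _ (by rw [h2t1]; exact hr0)
      rw [ht]; linarith
  have hq1 : q ≤ 1 := by
    rw [hq]; split
    · norm_num
    · rename_i h
      rw [div_le_one (by rw [h2t1]; exact lt_of_le_of_ne hr0 (Ne.symm h))]
      rw [ht]; linarith
  have hqdiag : q * t + (1 - q) * (1 - t) = x := by
    by_cases h : r = 0
    · have hxhalf : x = 1/2 := by
        rw [h] at hra hrb; linarith
      have : t = 1/2 := by rw [ht, h]; norm_num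
      rw [this, hxhalf]; ring
    · rw [hq, if_neg h]
      have hne : 2 * t - 1 ≠ 0 := by rw [h2t1]; exact h
      have e : (x - (1 - t)) / (2 * t - 1) * (2 * t - 1) = x - (1 - t) := div_mul_cancel₀ _ hne
      linear_combination e
  -- the states
  set χ : Fin 2 → ℂ := ![u * ((Real.sqrt t : ℝ) : ℂ), ((Real.sqrt (1 - t) : ℝ) : ℂ)] with hχ
  set φ : Fin 2 → ℂ := ![u * ((Real.sqrt (1 - t) : ℝ) : ℂ), ((Real.sqrt t : ℝ) : ℂ)] with hφ
  have hnχ0 : ‖χ 0‖ ^ 2 = t := by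
    rw [hχ]
    simp only [Matrix.cons_val_zero, norm_mul, Complex.norm_real, Complex.norm_eq_abs, huabs,
      one_mul]
    rw [Complex.abs_ofReal, abs_of_nonneg (Real.sqrt_nonneg t), Real.sq_sqrt ht0]
  have hnχ1 : ‖χ 1‖ ^ 2 = 1 - t := by
    rw [hχ]
    simp only [Matrix.cons_val_one, Matrix.head_cons, Matrix.cons_val_zero, Complex.norm_real,
      Complex.norm_eq_abs]
    rw [Complex.abs_ofReal, abs_of_nonneg (Real.sqrt_nonneg _), Real.sq_sqrt ht1']
  have hnφ0 : ‖φ 0‖ ^ 2 = 1 - t := by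
    rw [hφ]
    simp only [Matrix.cons_val_zero, norm_mul, Complex.norm_real, Complex.norm_eq_abs, huabs,
      one_mul]
    rw [Complex.abs_ofReal, abs_of_nonneg (Real.sqrt_nonneg _), Real.sq_sqrt ht1']
  have hnφ1 : ‖φ 1‖ ^ 2 = t := by
    rw [hφ]
    simp only [Matrix.cons_val_one, Matrix.head_cons, Matrix.cons_val_zero, Complex.norm_real,
      Complex.norm_eq_abs]
    rw [Complex.abs_ofReal, abs_of_nonneg (Real.sqrt_nonneg _), Real.sq_sqrt ht0]
  refine ⟨q, χ, φ, hq0, hq1, ?_, ?_, ?_, ⟨hnχ0, by rw [hnχ1]⟩, ⟨hnφ0, by rw [hnφ1]⟩⟩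
  · rw [Fin.sum_univ_two, hnχ0, hnχ1]; ring
  · rw [Fin.sum_univ_two, hnφ0, hnφ1]; ring
  · -- the matrix identity
    have hsc : ((Real.sqrt t : ℝ) : ℂ) * ((Real.sqrt (1 - t) : ℝ) : ℂ) = ((c : ℝ) : ℂ) := by
      norm_cast
    have hst2 : ((Real.sqrt t : ℝ) : ℂ) * ((Real.sqrt t : ℝ) : ℂ) = ((t : ℝ) : ℂ) := by
      norm_cast
      exact Real.mul_self_sqrt ht0
    have hst2' : ((Real.sqrt (1 - t) : ℝ) : ℂ) * ((Real.sqrt (1 - t) : ℝ) : ℂ)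
        = (((1 - t : ℝ)) : ℂ) := by
      norm_cast
      exact Real.mul_self_sqrt ht1'
    funext i j
    fin_cases i <;> fin_cases j <;>
      simp only [Fin.mk_zero, Fin.mk_one, Fin.isValue, Matrix.add_apply, Matrix.smul_apply,
        vecMulVec_apply, Pi.star_apply, hχ, hφ,
        Matrix.cons_val_zero, Matrix.cons_val_one, Matrix.head_cons, RCLike.star_def,
        Complex.conj_ofReal, _root_.map_mul, smul_eq_mul]
    · -- entry 0 0
      rw [h00]
      have : (q:ℂ) * (u * ↑(Real.sqrt t) * ((starRingEnd ℂ) u * ↑(Real.sqrt t)))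
          + ((1 - q : ℝ):ℂ) * (u * ↑(Real.sqrt (1-t)) * ((starRingEnd ℂ) u * ↑(Real.sqrt (1-t))))
          = (q:ℂ) * (t:ℂ) + ((1-q:ℝ):ℂ) * ((1-t:ℝ):ℂ) := by
        rw [show u * ↑(Real.sqrt t) * ((starRingEnd ℂ) u * ↑(Real.sqrt t))
            = (u * (starRingEnd ℂ) u) * (↑(Real.sqrt t) * ↑(Real.sqrt t)) by ring, huu, hst2]
        rw [show u * ↑(Real.sqrt (1-t)) * ((starRingEnd ℂ) u * ↑(Real.sqrt (1-t)))
            = (u * (starRingEnd ℂ) u) * (↑(Real.sqrt (1-t)) * ↑(Real.sqrt (1-t))) by ring, huu,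
          hst2']
        ring
      rw [this, ← hqdiag]
      push_cast
      ring
    · -- entry 0 1
      rw [← huc]
      rw [show (q:ℂ) * (u * ↑(Real.sqrt t) * ↑(Real.sqrt (1-t)))
          + ((1-q:ℝ):ℂ) * (u * ↑(Real.sqrt (1-t)) * ↑(Real.sqrt t))
          = ((q:ℂ) + ((1-q:ℝ):ℂ)) * (u * (↑(Real.sqrt t) * ↑(Real.sqrt (1-t)))) by ring, hsc]
      push_cast
      ring
    · -- entry 1 0
      rw [h10, ← huc, _root_.map_mul, Complex.conj_ofReal]
      rw [show (q:ℂ) * (↑(Real.sqrt (1-t)) * ((starRingEnd ℂ) u * ↑(Real.sqrt t)))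
          + ((1-q:ℝ):ℂ) * (↑(Real.sqrt t) * ((starRingEnd ℂ) u * ↑(Real.sqrt (1-t))))
          = ((q:ℂ) + ((1-q:ℝ):ℂ)) * ((starRingEnd ℂ) u * (↑(Real.sqrt t) * ↑(Real.sqrt (1-t))))
          by ring, hsc]
      push_cast
      ring
    · -- entry 1 1
      rw [h11]
      rw [show (q:ℂ) * (↑(Real.sqrt (1-t)) * ↑(Real.sqrt (1-t)))
          + ((1-q:ℝ):ℂ) * (↑(Real.sqrt t) * ↑(Real.sqrt t))
          = (q:ℂ) * (↑(Real.sqrt (1-t)) * ↑(Real.sqrt (1-t)))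
            + ((1-q:ℝ):ℂ) * (↑(Real.sqrt t) * ↑(Real.sqrt t)) by ring, hst2, hst2']
      have : x = q * t + (1 - q) * (1 - t) := hqdiag.symm
      rw [show ((1 - x : ℝ):ℂ) = 1 - ((x:ℝ):ℂ) by push_cast; ring, this]
      push_cast
      ring

end decomp


section assembly
variable {n : Type*} [Fintype n]

lemma CfSet_bddBelow (ρ : Matrix n n ℂ) : BddBelow (CfSet ρ) := by
  refine ⟨0, fun x hx => ?_⟩
  obtain ⟨m, p, ψ, hpos, hsum, hnorm, -, rfl⟩ := hx
  refine Finset.sum_nonneg fun i _ => mul_nonneg (hpos i).le ?_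
  exact shannon2_nonneg (fun j => sq_nonneg _) (hnorm i)

/-- Membership in the `Cf` defining set from a decomposition with merely nonnegative
weights over an arbitrary finite index type. -/
lemma decomp_mem {ι : Type*} [Fintype ι] (ρ : Matrix n n ℂ) (p : ι → ℝ) (ψ : ι → n → ℂ)
    (hp : ∀ i, 0 ≤ p i) (hsum : ∑ i, p i = 1)
    (hψ : ∀ i, p i ≠ 0 → ∑ j, ‖ψ i j‖ ^ 2 = 1)
    (hρ : ρ = ∑ i, ((p i : ℝ) : ℂ) • Matrix.vecMulVec (ψ i) (star (ψ i))) :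
    (∑ i, p i * shannon2 (fun j => ‖ψ i j‖ ^ 2)) ∈ CfSet ρ := by
  classical
  set T := {i : ι // p i ≠ 0}
  set e : Fin (Fintype.card T) ≃ T := (Fintype.equivFin T).symm
  have hgen : ∀ (f : ι → ℝ), (∀ i, p i = 0 → f i = 0) →
      ∑ k, f ((e k) : ι) = ∑ i, f i := by
    intro f hf
    rw [Equiv.sum_comp e (fun t : T => f (t : ι))]
    rw [← Finset.sum_subtype (Finset.univ.filter (fun i => p i ≠ 0))
      (by simp) (fun i => f i)]
    exact Finset.sum_filter_of_ne (fun i _ hfi => by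
      intro hpi; exact hfi (hf i hpi))
  have hgenC : ∀ (f : ι → Matrix n n ℂ), (∀ i, p i = 0 → f i = 0) →
      ∑ k, f ((e k) : ι) = ∑ i, f i := by
    intro f hf
    rw [Equiv.sum_comp e (fun t : T => f (t : ι))]
    rw [← Finset.sum_subtype (Finset.univ.filter (fun i => p i ≠ 0))
      (by simp) (fun i => f i)]
    exact Finset.sum_filter_of_ne (fun i _ hfi => by
      intro hpi; exact hfi (hf i hpi))
  refine ⟨Fintype.card T, fun k => p (e k), fun k => ψ (e k), ?_, ?_, ?_, ?_, ?_⟩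
  · exact fun k => lt_of_le_of_ne (hp _) (Ne.symm (e k).2)
  · rw [hgen p (fun i h => h)]; exact hsum
  · exact fun k => hψ _ (e k).2
  · rw [hρ]
    exact (hgenC (fun i => ((p i : ℝ) : ℂ) • Matrix.vecMulVec (ψ i) (star (ψ i)))
      (fun i h => by
        show ((p i : ℝ) : ℂ) • Matrix.vecMulVec (ψ i) (star (ψ i)) = 0
        rw [h]; simp)).symm
  · exact (hgen (fun i => p i * shannon2 fun j => ‖ψ i j‖ ^ 2)
      (fun i h => by
        show p i * shannon2 (fun j => ‖ψ i j‖ ^ 2) = 0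
        rw [h, zero_mul])).symm

end assembly

/-- **Theorem 2.** The coherence of formation of a single-qubit state cannot be increased
by a non-coherence-generating qubit channel. -/
theorem Cf_monotone_under_qubit_NC (N : ℕ)
    (K : Fin N → Matrix (Fin 2) (Fin 2) ℂ)
    (hKraus : ∑ i, (K i)ᴴ * K i = 1)
    (hNC : ∀ σ : Matrix (Fin 2) (Fin 2) ℂ,
      IsDensityMatrix σ → σ.IsDiag → (krausApply K σ).IsDiag)
    (ρ : Matrix (Fin 2) (Fin 2) ℂ) (hρ : IsDensityMatrix ρ) :
    Cf (krausApply K ρ) ≤ Cf ρ := by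
  classical
  -- `CfSet ρ` is nonempty, via the explicit qubit decomposition of `ρ`.
  obtain ⟨q₀, χ₀, φ₀, hq₀0, hq₀1, hχ₀, hφ₀, hdec₀, -, -⟩ := qubit_decomp hρ
  have hmem₀ := decomp_mem (ι := Fin 2) ρ ![q₀, 1 - q₀] ![χ₀, φ₀]
    (by intro i; fin_cases i <;> simp [hq₀0, hq₀1] <;> linarith)
    (by simp [Fin.sum_univ_two])
    (by intro i _
        fin_cases i
        · simpa [Fin.sum_univ_two] using hχ₀
        · simpa [Fin.sum_univ_two] using hφ₀)
    (by rw [hdec₀, Fin.sum_univ_two]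
        simp only [Matrix.cons_val_zero, Matrix.cons_val_one, Matrix.head_cons])
  have hne : (CfSet ρ).Nonempty := ⟨_, hmem₀⟩
  rw [Cf_eq_sInf, Cf_eq_sInf]
  refine le_csInf hne fun y hy => ?_
  obtain ⟨m, p, ψ, hpos, hsum, hnorm, hdecomp, rfl⟩ := hy
  -- apply the channel to the decomposition
  have hΛ : krausApply K ρ
      = ∑ i, ((p i : ℝ) : ℂ) • krausApply K (Matrix.vecMulVec (ψ i) (star (ψ i))) := by
    rw [hdecomp, krausApply_sum_smul]
  -- each output is a density matrix; decompose it
  have hstep : ∀ i : Fin m, ∃ (q : ℝ) (χ φ : Fin 2 → ℂ),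
      0 ≤ q ∧ q ≤ 1 ∧ (∑ j, ‖χ j‖ ^ 2 = 1) ∧ (∑ j, ‖φ j‖ ^ 2 = 1) ∧
      krausApply K (Matrix.vecMulVec (ψ i) (star (ψ i)))
        = ((q : ℝ) : ℂ) • vecMulVec χ (star χ)
          + (((1 - q : ℝ)) : ℂ) • vecMulVec φ (star φ) ∧
      shannon2 (fun j => ‖χ j‖ ^ 2) ≤ shannon2 (fun j => ‖ψ i j‖ ^ 2) ∧
      shannon2 (fun j => ‖φ j‖ ^ 2) ≤ shannon2 (fun j => ‖ψ i j‖ ^ 2) := by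
    intro i
    set σ := krausApply K (Matrix.vecMulVec (ψ i) (star (ψ i))) with hσdef
    have hσ : IsDensityMatrix σ :=
      krausApply_isDensity K hKraus ⟨pure_posSemidef (ψ i), pure_trace (ψ i) (hnorm i)⟩
    obtain ⟨q, χ, φ, hq0, hq1, hχn, hφn, hdec, ⟨hχ0, hχ1⟩, ⟨hφ0, hφ1⟩⟩ := qubit_decomp hσ
    -- the entropy bound
    have hs01 : ‖ψ i 1‖ ^ 2 = 1 - ‖ψ i 0‖ ^ 2 := by
      have := hnorm i
      rw [Fin.sum_univ_two] at this
      linarith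
    have hcb : Complex.abs (σ 0 1) ≤ ‖ψ i 0‖ * ‖ψ i 1‖ :=
      pure_offdiag_bound K hKraus hNC (ψ i)
    have hcsq : Complex.abs (σ 0 1) ^ 2 ≤ (‖ψ i 0‖ ^ 2) * (1 - ‖ψ i 0‖ ^ 2) := by
      rw [← hs01]
      calc Complex.abs (σ 0 1) ^ 2 ≤ (‖ψ i 0‖ * ‖ψ i 1‖) ^ 2 := by
            apply pow_le_pow_left₀ (Complex.abs.nonneg _) hcb
        _ = ‖ψ i 0‖ ^ 2 * ‖ψ i 1‖ ^ 2 := by ring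
    have hHb : H2 ((1 + Real.sqrt (1 - 4 * Complex.abs (σ 0 1) ^ 2)) / 2)
        ≤ H2 (‖ψ i 0‖ ^ 2) :=
      H2_bound (sq_nonneg _) (by nlinarith [sq_nonneg (‖ψ i 1‖)])
        (Complex.abs.nonneg _) hcsq
    have hψH : shannon2 (fun j => ‖ψ i j‖ ^ 2) = H2 (‖ψ i 0‖ ^ 2) :=
      shannon2_two rfl hs01
    have hχH : shannon2 (fun j => ‖χ j‖ ^ 2)
        = H2 ((1 + Real.sqrt (1 - 4 * Complex.abs (σ 0 1) ^ 2)) / 2) :=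
      shannon2_two hχ0 (by rw [hχ1])
    have hφH : shannon2 (fun j => ‖φ j‖ ^ 2)
        = H2 ((1 + Real.sqrt (1 - 4 * Complex.abs (σ 0 1) ^ 2)) / 2) := by
      rw [shannon2_two hφ0 (by rw [hφ1]; ring)]
      rw [H2_one_sub]
    exact ⟨q, χ, φ, hq0, hq1, hχn, hφn, hdec,
      by rw [hχH, hψH]; exact hHb, by rw [hφH, hψH]; exact hHb⟩
  choose q χ φ hq0 hq1 hχn hφn hdec hχe hφe using hstep
  -- build the combined decomposition over `Fin m × Fin 2`
  set P : Fin m × Fin 2 → ℝ := fun ik => p ik.1 * (if ik.2 = 0 then q ik.1 else 1 - q ik.1)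
    with hP
  set Ψ : Fin m × Fin 2 → Fin 2 → ℂ := fun ik => if ik.2 = 0 then χ ik.1 else φ ik.1 with hΨ
  have hP0 : ∀ i, P (i, 0) = p i * q i := fun i => by simp [hP]
  have hP1 : ∀ i, P (i, 1) = p i * (1 - q i) := fun i => by simp [hP]
  have hΨ0 : ∀ i, Ψ (i, 0) = χ i := fun i => by simp [hΨ]
  have hΨ1 : ∀ i, Ψ (i, 1) = φ i := fun i => by simp [hΨ]
  have hPnn : ∀ ik, 0 ≤ P ik := by
    intro ik
    refine mul_nonneg (hpos ik.1).le ?_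
    split
    · exact hq0 ik.1
    · linarith [hq1 ik.1]
  have hPsum : ∑ ik, P ik = 1 := by
    rw [Fintype.sum_prod_type]
    simp only [Fin.sum_univ_two]
    have hfib : ∀ i ∈ Finset.univ, P (i, 0) + P (i, 1) = p i := fun i _ => by
      rw [hP0 i, hP1 i]; ring
    rw [Finset.sum_congr rfl hfib]
    exact hsum
  have hΨn : ∀ ik, P ik ≠ 0 → ∑ j, ‖Ψ ik j‖ ^ 2 = 1 := by
    rintro ⟨i, k⟩ -
    by_cases hk : k = 0
    · subst hk; rw [hΨ0]; exact hχn i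
    · have hk1 : k = 1 := by
        fin_cases k
        · exact absurd rfl hk
        · rfl
      rw [hk1, hΨ1]; exact hφn i
  have hΛdec : krausApply K ρ = ∑ ik, ((P ik : ℝ) : ℂ) • vecMulVec (Ψ ik) (star (Ψ ik)) := by
    rw [hΛ, Fintype.sum_prod_type]
    refine Finset.sum_congr rfl fun i _ => ?_
    rw [hdec i, Fin.sum_univ_two, hP0 i, hP1 i, hΨ0 i, hΨ1 i, smul_add, smul_smul, smul_smul,
      show ((p i : ℝ) : ℂ) * ((q i : ℝ) : ℂ) = ((p i * q i : ℝ) : ℂ) by push_cast; ring,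
      show ((p i : ℝ) : ℂ) * ((1 - q i : ℝ) : ℂ) = ((p i * (1 - q i) : ℝ) : ℂ) by
        push_cast; ring]
  have hval : ∑ ik, P ik * shannon2 (fun j => ‖Ψ ik j‖ ^ 2)
      ≤ ∑ i, p i * shannon2 (fun j => ‖ψ i j‖ ^ 2) := by
    rw [Fintype.sum_prod_type]
    refine Finset.sum_le_sum fun i _ => ?_
    rw [Fin.sum_univ_two, hP0 i, hP1 i, hΨ0 i, hΨ1 i]
    calc p i * q i * shannon2 (fun j => ‖χ i j‖ ^ 2)
        + p i * (1 - q i) * shannon2 (fun j => ‖φ i j‖ ^ 2)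
        ≤ p i * q i * shannon2 (fun j => ‖ψ i j‖ ^ 2)
          + p i * (1 - q i) * shannon2 (fun j => ‖ψ i j‖ ^ 2) := by
          refine add_le_add ?_ ?_
          · exact mul_le_mul_of_nonneg_left (hχe i)
              (mul_nonneg (hpos i).le (hq0 i))
          · exact mul_le_mul_of_nonneg_left (hφe i)
              (mul_nonneg (hpos i).le (by linarith [hq1 i]))
      _ = p i * shannon2 (fun j => ‖ψ i j‖ ^ 2) := by ring
  have hmem := decomp_mem (krausApply K ρ) P Ψ hPnn hPsum hΨn hΛdec
  exact le_trans (csInf_le (CfSet_bddBelow _) hmem) hval
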